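/- If ḡ : ℝ → ℝ is three times differentiable, satisfies ḡ''' = 4 ḡ', and ḡ(x) ≠ 0, then h := -ḡ'/ḡ satisfies h'' - 3 h h' + h(h² - 4) = 0. -/

import Mathlib

/-- Linearization of the n = 2 Riccati-type equation: if `ḡ''' = 4 ḡ'` and
`ḡ x ≠ 0`, then `h := -ḡ'/ḡ` satisfies `h'' - 3 h h' + h (h² - 4) = 0` at `x`. -/
theorem stmt7 (g : ℝ → ℝ)
    (hg : Differentiable ℝ g) (hg' : Differentiable ℝ (deriv g))
    (hg'' : Differentiable ℝ (deriv (deriv g)))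
    (hODE : ∀ t, deriv (deriv (deriv g)) t = 4 * deriv g t)
    (x : ℝ) (hx : g x ≠ 0) :
    (let h : ℝ → ℝ := fun t => -deriv g t / g t
    deriv (deriv h) x - 3 * h x * deriv h x + h x * ((h x) ^ 2 - 4) = 0) := by
  intro h
  have hev : ∀ᶠ t in nhds x, g t ≠ 0 :=
    (hg.continuous.continuousAt).eventually_ne hx
  have key : ∀ t, g t ≠ 0 → HasDerivAt h
      ((-(deriv (deriv g) t) * g t - (-(deriv g t)) * deriv g t) / (g t) ^ 2) t := by
    intro t ht
    exact ((hg' t).hasDerivAt.neg).div (hg t).hasDerivAt ht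
  have hd : deriv h =ᶠ[nhds x]
      fun t => (-(deriv (deriv g) t) * g t - (-(deriv g t)) * deriv g t) / (g t) ^ 2 := by
    filter_upwards [hev] with t ht
    exact (key t ht).deriv
  have h3 : HasDerivAt (deriv (deriv g)) (4 * deriv g x) x := by
    have := (hg'' x).hasDerivAt
    rwa [hODE x] at this
  have hnum : HasDerivAt (fun t => -(deriv (deriv g) t) * g t - (-(deriv g t)) * deriv g t)
      ((-(4 * deriv g x)) * g x + (-(deriv (deriv g) x)) * deriv g x -
        ((-(deriv (deriv g) x)) * deriv g x + (-(deriv g x)) * deriv (deriv g) x)) x := by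
    exact ((h3.neg.mul (hg x).hasDerivAt)).sub
      (((hg' x).hasDerivAt.neg).mul (hg' x).hasDerivAt)
  have hden : HasDerivAt (fun t => (g t) ^ 2) (2 * g x ^ 1 * deriv g x) x := by
    exact ((hg x).hasDerivAt.fun_pow 2).congr_deriv (by norm_num)
  have hq := hnum.div hden (pow_ne_zero 2 hx)
  have h2 : deriv (deriv h) x =
      (((-(4 * deriv g x)) * g x + (-(deriv (deriv g) x)) * deriv g x -
        ((-(deriv (deriv g) x)) * deriv g x + (-(deriv g x)) * deriv (deriv g) x)) * (g x) ^ 2 -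
        (-(deriv (deriv g) x) * g x - (-(deriv g x)) * deriv g x) * (2 * g x ^ 1 * deriv g x)) /
        ((g x) ^ 2) ^ 2 := by
    rw [hd.deriv_eq]
    exact hq.deriv
  have h1 : deriv h x =
      (-(deriv (deriv g) x) * g x - (-(deriv g x)) * deriv g x) / (g x) ^ 2 :=
    (key x hx).deriv
  show deriv (deriv h) x - 3 * (-deriv g x / g x) * deriv h x +
      (-deriv g x / g x) * ((-deriv g x / g x) ^ 2 - 4) = 0
  rw [h1, h2]
  field_simp
  ring
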